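/- Let I ⊆ ℝ be an open interval and c: I → (0,∞) a smooth function. A smooth function Λ = Λ(t,x,u,v,w), defined for (t,x) ∈ ℝ², u ∈ I, (v,w) ∈ ℝ², satisfies the first-order linear partial differential equation c'(u)·(v·∂Λ/∂v + w·∂Λ/∂w − Λ) = 2·c(u)·∂Λ/∂u identically if and only if there exists a smooth function f = f(t,x,α,β) on ℝ⁴ such that Λ(t,x,u,v,w) = c(u)^{-1/2}·f(t, x, c(u)^{1/2}·v, c(u)^{1/2}·w) for all (t,x,u,v,w). -/

import Mathlib

/-!
Solution of the first-order linear PDE c'(v·Λ_v + w·Λ_w − Λ) = 2c·Λ_u: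
Λ = c(u)^{-1/2}·f(t,x,c(u)^{1/2}v,c(u)^{1/2}w).
-/

noncomputable section

/-- Smoothness of a function of five real variables, on the set where the
third variable (the value of u) lies in `I`. -/
def SmoothOn5 (I : Set ℝ) (Λ : ℝ → ℝ → ℝ → ℝ → ℝ → ℝ) : Prop :=
  ContDiffOn ℝ (⊤ : ℕ∞)
    (fun v : ℝ × ℝ × ℝ × ℝ × ℝ => Λ v.1 v.2.1 v.2.2.1 v.2.2.2.1 v.2.2.2.2)
    {v : ℝ × ℝ × ℝ × ℝ × ℝ | v.2.2.1 ∈ I}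

/-- Smoothness of a function of four real variables. -/
def Smooth4 (f : ℝ → ℝ → ℝ → ℝ → ℝ) : Prop :=
  ContDiff ℝ (⊤ : ℕ∞)
    (fun v : ℝ × ℝ × ℝ × ℝ => f v.1 v.2.1 v.2.2.1 v.2.2.2)

namespace WaveMultAux

abbrev E5 := ℝ × ℝ × ℝ × ℝ × ℝ
abbrev E4 := ℝ × ℝ × ℝ × ℝ

lemma slice_u (F : E5 → ℝ) (t x u v w : ℝ)
    (hF : DifferentiableAt ℝ F ((t,x,u,v,w) : E5)) :
    HasDerivAt (fun s => F (t,x,s,v,w)) (fderiv ℝ F ((t,x,u,v,w):E5) ((0,0,1,0,0):E5)) u :=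
  hF.hasFDerivAt.comp_hasDerivAt u <|
    HasDerivAt.prodMk (hasDerivAt_const _ _) (HasDerivAt.prodMk (hasDerivAt_const _ _) (HasDerivAt.prodMk (hasDerivAt_id _)
      (HasDerivAt.prodMk (hasDerivAt_const _ _) (hasDerivAt_const _ _))))

lemma slice_v (F : E5 → ℝ) (t x u v w : ℝ)
    (hF : DifferentiableAt ℝ F ((t,x,u,v,w) : E5)) :
    HasDerivAt (fun s => F (t,x,u,s,w)) (fderiv ℝ F ((t,x,u,v,w):E5) ((0,0,0,1,0):E5)) v :=
  hF.hasFDerivAt.comp_hasDerivAt v <|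
    HasDerivAt.prodMk (hasDerivAt_const _ _) (HasDerivAt.prodMk (hasDerivAt_const _ _) (HasDerivAt.prodMk (hasDerivAt_const _ _)
      (HasDerivAt.prodMk (hasDerivAt_id _) (hasDerivAt_const _ _))))

lemma slice_w (F : E5 → ℝ) (t x u v w : ℝ)
    (hF : DifferentiableAt ℝ F ((t,x,u,v,w) : E5)) :
    HasDerivAt (fun s => F (t,x,u,v,s)) (fderiv ℝ F ((t,x,u,v,w):E5) ((0,0,0,0,1):E5)) w :=
  hF.hasFDerivAt.comp_hasDerivAt w <|
    HasDerivAt.prodMk (hasDerivAt_const _ _) (HasDerivAt.prodMk (hasDerivAt_const _ _) (HasDerivAt.prodMk (hasDerivAt_const _ _)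
      (HasDerivAt.prodMk (hasDerivAt_const _ _) (hasDerivAt_id _))))

lemma lin5 (a b : ℝ) (L : E5 →L[ℝ] ℝ) :
    L ((0,0,1,a,b) : E5)
      = L ((0,0,1,0,0):E5) + a * L ((0,0,0,1,0):E5) + b * L ((0,0,0,0,1):E5) := by
  have h : ((0,0,1,a,b) : E5) = (0,0,1,0,0) + a • ((0,0,0,1,0):E5) + b • ((0,0,0,0,1):E5) := by
    simp [Prod.ext_iff]
  rw [h, map_add, map_add, map_smul, map_smul]
  simp [smul_eq_mul]

lemma lin4 (a b : ℝ) (M : E4 →L[ℝ] ℝ) :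
    M ((0,0,a,b) : E4) = a * M ((0,0,1,0):E4) + b * M ((0,0,0,1):E4) := by
  have h : ((0,0,a,b) : E4) = a • ((0,0,1,0):E4) + b • ((0,0,0,1):E4) := by
    simp [Prod.ext_iff]
  rw [h, map_add, map_smul, map_smul]
  simp [smul_eq_mul]

/-- Derivative of `r ↦ G (t, x, S r * v, S r * w)` type curves, 4-variable version. -/
lemma curve4 (G : E4 → ℝ) (t x : ℝ) (p q : ℝ → ℝ) (p' q' u : ℝ)
    (hG : DifferentiableAt ℝ G ((t,x,p u,q u) : E4))
    (hp : HasDerivAt p p' u) (hq : HasDerivAt q q' u) :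
    HasDerivAt (fun r => G (t,x,p r,q r))
      (p' * fderiv ℝ G ((t,x,p u,q u):E4) ((0,0,1,0):E4)
        + q' * fderiv ℝ G ((t,x,p u,q u):E4) ((0,0,0,1):E4)) u := by
  have h := hG.hasFDerivAt.comp_hasDerivAt u
    (HasDerivAt.prodMk (hasDerivAt_const u t) (HasDerivAt.prodMk (hasDerivAt_const u x) (HasDerivAt.prodMk hp hq)))
  rwa [show ((0,0,p',q') : E4) = (0,0,p',q') from rfl, lin4] at h

/-- 5-variable curve `r ↦ F (t, x, r, p r, q r)`. -/
lemma curve5 (F : E5 → ℝ) (t x : ℝ) (p q : ℝ → ℝ) (p' q' u : ℝ)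
    (hF : DifferentiableAt ℝ F ((t,x,u,p u,q u) : E5))
    (hp : HasDerivAt p p' u) (hq : HasDerivAt q q' u) :
    HasDerivAt (fun r => F (t,x,r,p r,q r))
      (fderiv ℝ F ((t,x,u,p u,q u):E5) ((0,0,1,0,0):E5)
        + p' * fderiv ℝ F ((t,x,u,p u,q u):E5) ((0,0,0,1,0):E5)
        + q' * fderiv ℝ F ((t,x,u,p u,q u):E5) ((0,0,0,0,1):E5)) u := by
  have h := hF.hasFDerivAt.comp_hasDerivAt u
    (HasDerivAt.prodMk (hasDerivAt_const u t) (HasDerivAt.prodMk (hasDerivAt_const u x)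
      (HasDerivAt.prodMk (hasDerivAt_id u) (HasDerivAt.prodMk hp hq))))
  rwa [lin5] at h

lemma keylem (S c' Fp L3 L4 L5 a b : ℝ) (hS0 : S ≠ 0)
    (hpde : c' * (a * S⁻¹ * L4 + b * S⁻¹ * L5 - Fp) = 2 * S ^ 2 * L3) :
    1 / (2 * S) * c' * Fp
      + S * (L3 + a * (-(1 / (2 * S) * c') / S ^ 2) * L4
        + b * (-(1 / (2 * S) * c') / S ^ 2) * L5) = 0 := by
  field_simp at hpde ⊢
  linear_combination (-1) * hpde

end WaveMultAux

open WaveMultAux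

/-- A smooth `Λ(t,x,u,v,w)` (with `u` ranging in the open interval `I` on
which the wave speed `c` is smooth and positive) satisfies
`c'(u)·(v·Λ_v + w·Λ_w − Λ) = 2c(u)·Λ_u` identically iff
`Λ = c(u)^{-1/2}·f(t,x,c(u)^{1/2}·v,c(u)^{1/2}·w)` for some smooth `f` on ℝ⁴. -/
theorem wave_multiplier_characteristic_form
    (I : Set ℝ) (hIo : IsOpen I) (hIc : IsPreconnected I)
    (c : ℝ → ℝ) (hc : ContDiffOn ℝ (⊤ : ℕ∞) c I) (hcpos : ∀ u ∈ I, 0 < c u)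
    (Λ : ℝ → ℝ → ℝ → ℝ → ℝ → ℝ) (hΛ : SmoothOn5 I Λ) :
    (∀ t x : ℝ, ∀ u ∈ I, ∀ v w : ℝ,
      deriv c u * (v * deriv (fun s => Λ t x u s w) v
          + w * deriv (fun s => Λ t x u v s) w - Λ t x u v w)
        = 2 * c u * deriv (fun s => Λ t x s v w) u) ↔
    ∃ f : ℝ → ℝ → ℝ → ℝ → ℝ, Smooth4 f ∧
      ∀ t x : ℝ, ∀ u ∈ I, ∀ v w : ℝ,
        Λ t x u v w
          = (Real.sqrt (c u))⁻¹
            * f t x (Real.sqrt (c u) * v) (Real.sqrt (c u) * w) := by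
  -- the uncurried Λ and its domain
  set F : E5 → ℝ := fun p => Λ p.1 p.2.1 p.2.2.1 p.2.2.2.1 p.2.2.2.2 with hF
  have hSopen : IsOpen {p : E5 | p.2.2.1 ∈ I} :=
    hIo.preimage (by fun_prop : Continuous fun p : E5 => p.2.2.1)
  have hFd : ∀ t x : ℝ, ∀ u ∈ I, ∀ v w : ℝ, DifferentiableAt ℝ F ((t,x,u,v,w) : E5) := by
    intro t x u hu v w
    exact (hΛ.contDiffAt (hSopen.mem_nhds (by exact hu))).differentiableAt (by simp)
  -- wave speed facts
  have hcd : ∀ u ∈ I, HasDerivAt c (deriv c u) u := fun u hu =>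
    ((hc.contDiffAt (hIo.mem_nhds hu)).differentiableAt (by simp)).hasDerivAt
  have hSqd : ∀ u ∈ I, HasDerivAt (fun r => Real.sqrt (c r))
      (1 / (2 * Real.sqrt (c u)) * deriv c u) u := fun u hu =>
    (Real.hasDerivAt_sqrt (ne_of_gt (hcpos u hu))).comp u (hcd u hu)
  have hsq : ∀ u ∈ I, Real.sqrt (c u) ^ 2 = c u := fun u hu =>
    Real.sq_sqrt (hcpos u hu).le
  have hspos : ∀ u ∈ I, 0 < Real.sqrt (c u) := fun u hu => Real.sqrt_pos.mpr (hcpos u hu)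
  constructor
  · -- forward direction
    intro hPDE
    rcases Set.eq_empty_or_nonempty I with hIe | ⟨u₀, hu₀⟩
    · exact ⟨fun _ _ _ _ => 0, contDiff_const, fun t x u hu => by simp [hIe] at hu⟩
    set s₀ : ℝ := Real.sqrt (c u₀) with hs₀
    have hs₀0 : s₀ ≠ 0 := (hspos u₀ hu₀).ne'
    refine ⟨fun t x α β => s₀ * Λ t x u₀ (α * s₀⁻¹) (β * s₀⁻¹), ?_, ?_⟩
    · -- smoothness of f
      have hφ : ContDiff ℝ (⊤ : ℕ∞)
          (fun q : E4 => ((q.1, q.2.1, u₀, q.2.2.1 * s₀⁻¹, q.2.2.2 * s₀⁻¹) : E5)) := by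
        fun_prop
      have hcomp : ContDiffOn ℝ (⊤ : ℕ∞)
          (fun q : E4 => F ((q.1, q.2.1, u₀, q.2.2.1 * s₀⁻¹, q.2.2.2 * s₀⁻¹) : E5))
          Set.univ :=
        hΛ.comp (hφ.contDiffOn) (fun q _ => by exact hu₀)
      have : ContDiff ℝ (⊤ : ℕ∞)
          (fun q : E4 => s₀ * F ((q.1, q.2.1, u₀, q.2.2.1 * s₀⁻¹, q.2.2.2 * s₀⁻¹) : E5)) :=
        contDiff_const.mul (contDiffOn_univ.mp hcomp)
      exact this
    · intro t x u hu v w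
      -- the characteristic invariant
      set α := Real.sqrt (c u) * v with hα
      set β := Real.sqrt (c u) * w with hβ
      set g : ℝ → ℝ := fun r =>
        Real.sqrt (c r) * F (t, x, r, α * (Real.sqrt (c r))⁻¹, β * (Real.sqrt (c r))⁻¹)
        with hg
      have hg0 : ∀ r ∈ I, HasDerivAt g 0 r := by
        intro r hr
        set S : ℝ := Real.sqrt (c r) with hS
        have hS0 : S ≠ 0 := (hspos r hr).ne'
        set c' : ℝ := deriv c r with hc'
        set s' : ℝ := 1 / (2 * S) * c' with hs'
        have hSd : HasDerivAt (fun r => Real.sqrt (c r)) s' r := hSqd r hr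
        have hinv : HasDerivAt (fun r => (Real.sqrt (c r))⁻¹) (-s' / S ^ 2) r :=
          hSd.inv hS0
        have hp : HasDerivAt (fun r => α * (Real.sqrt (c r))⁻¹) (α * (-s' / S ^ 2)) r :=
          hinv.const_mul α
        have hq : HasDerivAt (fun r => β * (Real.sqrt (c r))⁻¹) (β * (-s' / S ^ 2)) r :=
          hinv.const_mul β
        set vr : ℝ := α * S⁻¹ with hvr
        set wr : ℝ := β * S⁻¹ with hwr
        have hFdd := hFd t x r hr vr wr
        set L := fderiv ℝ F ((t,x,r,vr,wr) : E5) with hL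
        have hcurve : HasDerivAt
            (fun r' => F (t, x, r', α * (Real.sqrt (c r'))⁻¹, β * (Real.sqrt (c r'))⁻¹))
            (L ((0,0,1,0,0):E5) + (α * (-s' / S ^ 2)) * L ((0,0,0,1,0):E5)
              + (β * (-s' / S ^ 2)) * L ((0,0,0,0,1):E5)) r :=
          curve5 F t x _ _ _ _ r hFdd hp hq
        have hgd := hSd.mul hcurve
        -- the PDE at (t,x,r,vr,wr)
        have hpde := hPDE t x r hr vr wr
        rw [(slice_v F t x r vr wr hFdd).deriv, (slice_w F t x r vr wr hFdd).deriv,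
          (slice_u F t x r vr wr hFdd).deriv] at hpde
        have hΛeq : Λ t x r vr wr = F ((t,x,r,vr,wr) : E5) := rfl
        rw [hΛeq] at hpde
        have hcr : c r = S ^ 2 := (hsq r hr).symm
        rw [hcr, ← hc'] at hpde
        rw [← hL] at hpde
        rw [hvr, hwr] at hpde
        have key : s' * F ((t, x, r, vr, wr) : E5)
            + S * (L ((0,0,1,0,0):E5) + (α * (-s' / S ^ 2)) * L ((0,0,0,1,0):E5)
              + (β * (-s' / S ^ 2)) * L ((0,0,0,0,1):E5)) = 0 := by
          rw [hs']
          exact keylem S c' _ _ _ _ α β hS0 hpde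
        rw [hg]
        exact key ▸ hgd
      -- conclude by constancy on the convex set I
      have hconv : Convex ℝ I := hIc.convex
      have hgconst : g u = g u₀ := by
        apply hconv.is_const_of_fderivWithin_eq_zero
          (fun r hr => ((hg0 r hr).differentiableAt).differentiableWithinAt) ?_ hu hu₀
        intro r hr
        have h1 : fderivWithin ℝ g I r = fderiv ℝ g r :=
          fderivWithin_of_isOpen hIo hr
        rw [h1, (hg0 r hr).hasFDerivAt.fderiv]
        ext y
        simp
      have hs : Real.sqrt (c u) ≠ 0 := (hspos u hu).ne'
      have hv' : α * (Real.sqrt (c u))⁻¹ = v := by rw [hα]; field_simp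
      have hw' : β * (Real.sqrt (c u))⁻¹ = w := by rw [hβ]; field_simp
      have hgu : g u = Real.sqrt (c u) * Λ t x u v w := by
        simp only [hg]
        rw [hv', hw']
      have hgu₀ : g u₀ = s₀ * Λ t x u₀ (α * s₀⁻¹) (β * s₀⁻¹) := rfl
      have hkey : Real.sqrt (c u) * Λ t x u v w = s₀ * Λ t x u₀ (α * s₀⁻¹) (β * s₀⁻¹) := by
        rw [← hgu, ← hgu₀]; exact hgconst
      show Λ t x u v w = (Real.sqrt (c u))⁻¹ * (s₀ * Λ t x u₀ (α * s₀⁻¹) (β * s₀⁻¹))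
      rw [eq_comm, inv_mul_eq_iff_eq_mul₀ hs]
      exact hkey.symm
  · -- backward direction
    rintro ⟨f, hf, hΛf⟩ t x u hu v w
    set G : E4 → ℝ := fun q => f q.1 q.2.1 q.2.2.1 q.2.2.2 with hG
    have hGd : ∀ q : E4, DifferentiableAt ℝ G q := fun q =>
      (hf.differentiable (by simp)).differentiableAt
    set S : ℝ := Real.sqrt (c u) with hS
    have hS0 : S ≠ 0 := (hspos u hu).ne'
    set c' : ℝ := deriv c u with hc'
    set s' : ℝ := 1 / (2 * S) * c' with hs'
    have hSd : HasDerivAt (fun r => Real.sqrt (c r)) s' u := hSqd u hu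
    set M := fderiv ℝ G ((t, x, S * v, S * w) : E4) with hM
    set A : ℝ := M ((0,0,1,0):E4) with hA
    set B : ℝ := M ((0,0,0,1):E4) with hB
    -- derivative in v
    have hvslice : deriv (fun s => Λ t x u s w) v = S⁻¹ * (S * A) := by
      have heq : (fun s => Λ t x u s w) = fun s => S⁻¹ * G ((t, x, S * s, S * w) : E4) :=
        funext fun s => hΛf t x u hu s w
      rw [heq]
      have hcur : HasDerivAt (fun s => G ((t, x, S * s, S * w) : E4)) (S * A + 0 * B) v := by
        have hid : HasDerivAt (fun s : ℝ => S * s) S v := by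
          simpa using (hasDerivAt_id v).const_mul S
        have := curve4 G t x (fun s => S * s) (fun _ => S * w) S 0 v
          (hGd _) hid (hasDerivAt_const v (S * w))
        simpa using this
      have := (hcur.const_mul S⁻¹).deriv
      simpa using this
    have hwslice : deriv (fun s => Λ t x u v s) w = S⁻¹ * (S * B) := by
      have heq : (fun s => Λ t x u v s) = fun s => S⁻¹ * G ((t, x, S * v, S * s) : E4) :=
        funext fun s => hΛf t x u hu v s
      rw [heq]
      have hcur : HasDerivAt (fun s => G ((t, x, S * v, S * s) : E4)) (0 * A + S * B) w := by
        have hid : HasDerivAt (fun s : ℝ => S * s) S w := by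
          simpa using (hasDerivAt_id w).const_mul S
        have := curve4 G t x (fun _ => S * v) (fun s => S * s) 0 S w
          (hGd _) (hasDerivAt_const w (S * v)) hid
        simpa using this
      have := (hcur.const_mul S⁻¹).deriv
      simpa using this
    -- derivative in u
    have huslice : deriv (fun s => Λ t x s v w) u
        = -s' / S ^ 2 * G ((t, x, S * v, S * w) : E4)
          + S⁻¹ * ((s' * v) * A + (s' * w) * B) := by
      have heq : (fun s => Λ t x s v w)
          =ᶠ[nhds u] fun r => (Real.sqrt (c r))⁻¹ * G ((t, x, Real.sqrt (c r) * v,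
              Real.sqrt (c r) * w) : E4) :=
        (hIo.eventually_mem hu).mono fun r hr => hΛf t x r hr v w
      rw [heq.deriv_eq]
      have hinv : HasDerivAt (fun r => (Real.sqrt (c r))⁻¹) (-s' / S ^ 2) u := hSd.inv hS0
      have hcur : HasDerivAt (fun r => G ((t, x, Real.sqrt (c r) * v,
          Real.sqrt (c r) * w) : E4)) ((s' * v) * A + (s' * w) * B) u := by
        have := curve4 G t x (fun r => Real.sqrt (c r) * v) (fun r => Real.sqrt (c r) * w)
          (s' * v) (s' * w) u (hGd _) (hSd.mul_const v) (hSd.mul_const w)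
        simpa using this
      have := (hinv.mul hcur).deriv
      exact this
    rw [hvslice, hwslice, huslice, hΛf t x u hu v w, ← hS]
    have hcu : c u = S ^ 2 := (hsq u hu).symm
    have hGΛ : f t x (S * v) (S * w) = G ((t, x, S * v, S * w) : E4) := rfl
    rw [hGΛ, hcu, hs']
    field_simp
    ring
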